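/- For μ > 0 and α > 0, the function d(k) = arctanh(μ/k)/k is Lipschitz continuous on the interval [μ + α, ∞), and its Lipschitz constant M satisfies μ/(2(μ+α)²·α) ≤ M ≤ 3/((μ+α)·α). -/

import Mathlib

/-- Inverse hyperbolic tangent. -/
noncomputable def artanh (x : ℝ) : ℝ := (1 / 2) * Real.log ((1 + x) / (1 - x))


open Set

noncomputable def gfun (μ : ℝ) (k : ℝ) : ℝ := (Real.log (k + μ) - Real.log (k - μ)) / (2 * k)

lemma f_eq_g {μ : ℝ} (hμ : 0 < μ) {k : ℝ} (hk : μ < k) :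
    artanh (μ / k) / k = gfun μ k := by
  have hk0 : 0 < k := hμ.trans hk
  have hkm : 0 < k - μ := by linarith
  have hkp : 0 < k + μ := by linarith
  have h1 : (1 + μ / k) / (1 - μ / k) = (k + μ) / (k - μ) := by
    field_simp
  unfold artanh gfun
  rw [h1, Real.log_div hkp.ne' hkm.ne']
  ring

/-- the derivative -/
noncomputable def Efun (μ : ℝ) (x : ℝ) : ℝ :=
  -(μ / (x * (x ^ 2 - μ ^ 2)) + (Real.log (x + μ) - Real.log (x - μ)) / (2 * x ^ 2))

lemma hasDerivAt_g {μ : ℝ} (hμ : 0 < μ) {x : ℝ} (hx : μ < x) :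
    HasDerivAt (gfun μ) (Efun μ x) x := by
  have hx0 : 0 < x := hμ.trans hx
  have hxm : 0 < x - μ := by linarith
  have hxp : 0 < x + μ := by linarith
  have h1 : HasDerivAt (fun k : ℝ => Real.log (k + μ)) (1 / (x + μ)) x := by
    simpa using ((hasDerivAt_id x).add_const μ).log hxp.ne'
  have h2 : HasDerivAt (fun k : ℝ => Real.log (k - μ)) (1 / (x - μ)) x := by
    simpa using ((hasDerivAt_id x).sub_const μ).log hxm.ne'
  have hnum := h1.sub h2
  have hden : HasDerivAt (fun k : ℝ => 2 * k) 2 x := by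
    simpa using (hasDerivAt_id x).const_mul 2
  have h := hnum.div hden (by positivity)
  have h3 : (0:ℝ) < x ^ 2 - μ ^ 2 := by nlinarith
  refine h.congr_deriv ?_
  simp only [Pi.sub_apply]
  unfold Efun
  field_simp
  ring

lemma E_bounds {μ α : ℝ} (hμ : 0 < μ) (hα : 0 < α) {x : ℝ} (hx : μ + α ≤ x) :
    μ / (x * (x ^ 2 - μ ^ 2)) ≤ -Efun μ x ∧ ‖Efun μ x‖ ≤ 3 / ((μ + α) * α) := by
  have hx0 : 0 < x := by linarith
  have hxm : 0 < x - μ := by linarith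
  have hxp : 0 < x + μ := by linarith
  have h3 : (0:ℝ) < x ^ 2 - μ ^ 2 := by nlinarith
  set L := Real.log (x + μ) - Real.log (x - μ) with hL
  have hL0 : 0 ≤ L := by
    have := Real.log_le_log hxm (by linarith : x - μ ≤ x + μ)
    linarith
  have hLup : L ≤ 2 * μ / (x - μ) := by
    have h1 : L = Real.log ((x + μ) / (x - μ)) := by
      rw [Real.log_div hxp.ne' hxm.ne']
    have h2 := Real.log_le_sub_one_of_pos (show (0:ℝ) < (x + μ) / (x - μ) by positivity)
    rw [h1]
    have : (x + μ) / (x - μ) - 1 = 2 * μ / (x - μ) := by field_simp; ring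
    linarith [h2, this ▸ h2]
  have ht1 : 0 ≤ μ / (x * (x ^ 2 - μ ^ 2)) := by positivity
  have ht2 : 0 ≤ L / (2 * x ^ 2) := by positivity
  have hEabs : ‖Efun μ x‖ = μ / (x * (x ^ 2 - μ ^ 2)) + L / (2 * x ^ 2) := by
    unfold Efun
    rw [Real.norm_eq_abs, abs_of_nonpos (by simp only [← hL]; linarith)]
    simp [hL]
  constructor
  · unfold Efun; simp only [← hL]; linarith
  · rw [hEabs]
    have hb1 : μ / (x * (x ^ 2 - μ ^ 2)) ≤ 1 / ((μ + α) * α) := by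
      rw [div_le_div_iff₀ (by positivity) (by positivity)]
      have h1 : (μ + α) * α ≤ x * (x - μ) := mul_le_mul hx (by linarith) hα.le hx0.le
      have key : ((μ + α) * α) * μ ≤ (x * (x - μ)) * (x + μ) :=
        mul_le_mul h1 (by linarith) hμ.le (by positivity)
      nlinarith [key]
    have hb2 : L / (2 * x ^ 2) ≤ 1 / ((μ + α) * α) := by
      have step : L / (2 * x ^ 2) ≤ (2 * μ / (x - μ)) / (2 * x ^ 2) := by
        exact div_le_div_of_nonneg_right hLup (by positivity)
      have step2 : (2 * μ / (x - μ)) / (2 * x ^ 2) = μ / (x ^ 2 * (x - μ)) := by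
        field_simp
      have step3 : μ / (x ^ 2 * (x - μ)) ≤ 1 / ((μ + α) * α) := by
        rw [div_le_div_iff₀ (by positivity) (by positivity)]
        have h1 : (μ + α) * α ≤ x * (x - μ) := mul_le_mul hx (by linarith) hα.le hx0.le
        have key : ((μ + α) * α) * μ ≤ (x * (x - μ)) * x :=
          mul_le_mul h1 (by linarith) hμ.le (by positivity)
        nlinarith [key]
      calc L / (2 * x ^ 2) ≤ (2 * μ / (x - μ)) / (2 * x ^ 2) := step
        _ = μ / (x ^ 2 * (x - μ)) := step2
        _ ≤ 1 / ((μ + α) * α) := step3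
    have h23 : (3:ℝ) / ((μ + α) * α) = 3 * (1 / ((μ + α) * α)) := by ring
    have hp : (0:ℝ) ≤ 1 / ((μ + α) * α) := by positivity
    linarith

lemma b_choice {μ α : ℝ} (hμ : 0 < μ) (hα : 0 < α) {c : ℝ} (hc1 : μ + α ≤ c)
    (hc2 : c ≤ μ + α + α ^ 2 / (12 * (μ + α))) :
    c * (c ^ 2 - μ ^ 2) ≤ 2 * (μ + α) ^ 2 * α := by
  have ha : 0 < μ + α := by linarith
  set t := c - (μ + α) with htdef
  have ht : 0 ≤ t := by simp only [htdef]; linarith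
  have h12 : 12 * (μ + α) * t ≤ α ^ 2 := by
    have : t ≤ α ^ 2 / (12 * (μ + α)) := by simp only [htdef]; linarith
    rw [le_div_iff₀ (by positivity)] at this
    linarith
  have hc : c = μ + α + t := by simp [htdef]
  rw [hc]
  have hαa : α ≤ μ + α := by linarith
  nlinarith [mul_nonneg ht ht, mul_nonneg (mul_nonneg ht ht) ht,
    mul_le_mul_of_nonneg_left h12 ht, mul_le_mul_of_nonneg_left h12 hμ.le,
    mul_le_mul_of_nonneg_left h12 hα.le, mul_nonneg (mul_nonneg hμ.le hα.le) ht]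

lemma lower_bound {μ α : ℝ} (hμ : 0 < μ) (hα : 0 < α) {m : ℝ} (hm : 0 ≤ m)
    (hl : LipschitzOnWith m.toNNReal (fun k : ℝ => artanh (μ / k) / k) (Set.Ici (μ + α))) :
    μ / (2 * (μ + α) ^ 2 * α) ≤ m := by
  obtain ⟨a, hadef⟩ : ∃ a : ℝ, a = μ + α := ⟨_, rfl⟩
  obtain ⟨b, hbdef⟩ : ∃ b : ℝ, b = a + α ^ 2 / (12 * a) := ⟨_, rfl⟩
  rw [← hadef] at hl ⊢
  have ha0 : 0 < a := by rw [hadef]; positivity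
  have hab : a < b := by
    rw [hbdef]
    have : 0 < α ^ 2 / (12 * a) := by positivity
    linarith
  have hμa : μ < a := by rw [hadef]; linarith
  have hcont : ContinuousOn (gfun μ) (Set.Icc a b) := fun x hx =>
    ((hasDerivAt_g hμ (lt_of_lt_of_le hμa hx.1)).continuousAt).continuousWithinAt
  obtain ⟨c, hc, hceq⟩ := exists_hasDerivAt_eq_slope (gfun μ) (Efun μ) hab hcont
    (fun x hx => hasDerivAt_g hμ (lt_of_lt_of_le hμa hx.1.le))
  have hca : a ≤ c := hc.1.le
  have hcb : c ≤ b := hc.2.le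
  have hc0 : 0 < c := lt_of_lt_of_le ha0 hca
  have hcm : μ < c := lt_of_lt_of_le hμa hca
  have h3 : (0:ℝ) < c ^ 2 - μ ^ 2 := by nlinarith
  have hca' : μ + α ≤ c := hadef ▸ hca
  have hE1 := (E_bounds hμ hα hca').1
  have hcub : c * (c ^ 2 - μ ^ 2) ≤ 2 * (μ + α) ^ 2 * α :=
    b_choice hμ hα hca' (by rw [← hadef]; rw [hadef] at hbdef ⊢; exact hbdef ▸ hcb)
  have hK : μ / (2 * (μ + α) ^ 2 * α) ≤ -Efun μ c := by
    refine le_trans ?_ hE1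
    exact div_le_div_of_nonneg_left hμ.le (by positivity) hcub
  have hba : 0 < b - a := by linarith
  have hslope : (μ / (2 * (μ + α) ^ 2 * α)) * (b - a) ≤ gfun μ a - gfun μ b := by
    have heq : -Efun μ c = (gfun μ a - gfun μ b) / (b - a) := by
      rw [hceq]; field_simp; ring
    rw [heq, le_div_iff₀ hba] at hK
    exact hK
  rw [lipschitzOnWith_iff_dist_le_mul] at hl
  have hlab := hl a Set.self_mem_Ici b (Set.mem_Ici.2 hab.le)
  rw [Real.dist_eq, Real.dist_eq, Real.coe_toNNReal _ hm] at hlab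
  rw [f_eq_g hμ hμa, f_eq_g hμ (lt_trans hμa hab)] at hlab
  have habs : gfun μ a - gfun μ b ≤ |gfun μ a - gfun μ b| := le_abs_self _
  have h1 : |gfun μ a - gfun μ b| ≤ m * (b - a) := by
    calc |gfun μ a - gfun μ b| ≤ m * |a - b| := hlab
      _ = m * (b - a) := by rw [abs_sub_comm, abs_of_pos hba]
  rw [hadef]
  have hfinal : (μ / (2 * (μ + α) ^ 2 * α)) * (b - a) ≤ m * (b - a) := by linarith
  exact le_of_mul_le_mul_right hfinal hba

lemma upper_lip {μ α : ℝ} (hμ : 0 < μ) (hα : 0 < α) :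
    LipschitzOnWith (3 / ((μ + α) * α)).toNNReal
      (fun k : ℝ => artanh (μ / k) / k) (Set.Ici (μ + α)) := by
  apply (convex_Ici (μ + α)).lipschitzOnWith_of_nnnorm_hasDerivWithin_le
    (f' := Efun μ)
  · intro x hx
    have hμx : μ < x := by have := Set.mem_Ici.1 hx; linarith
    exact ((hasDerivAt_g hμ hμx).hasDerivWithinAt).congr
      (fun y hy => f_eq_g hμ (by have := Set.mem_Ici.1 hy; linarith))
      (f_eq_g hμ hμx)
  · intro x hx
    rw [← NNReal.coe_le_coe, coe_nnnorm, Real.coe_toNNReal _ (by positivity)]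
    exact (E_bounds hμ hα (Set.mem_Ici.1 hx)).2


/-- For `μ, α > 0`, `d(k) = artanh(μ/k)/k` is Lipschitz on `[μ+α, ∞)` and its (best)
Lipschitz constant `M` satisfies `μ/(2(μ+α)²α) ≤ M ≤ 3/((μ+α)α)`. -/
theorem depth_lipschitzOnWith (μ α : ℝ) (hμ : 0 < μ) (hα : 0 < α) :
    ∃ M : ℝ, 0 ≤ M ∧
      LipschitzOnWith M.toNNReal (fun k : ℝ => artanh (μ / k) / k) (Set.Ici (μ + α)) ∧
      (∀ M' : ℝ, 0 ≤ M' →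
        LipschitzOnWith M'.toNNReal (fun k : ℝ => artanh (μ / k) / k) (Set.Ici (μ + α)) →
        M ≤ M') ∧
      μ / (2 * (μ + α) ^ 2 * α) ≤ M ∧ M ≤ 3 / ((μ + α) * α) := by
  set f : ℝ → ℝ := fun k : ℝ => artanh (μ / k) / k with hf
  set S : Set ℝ := {m : ℝ | 0 ≤ m ∧ LipschitzOnWith m.toNNReal f (Set.Ici (μ + α))} with hS
  have hup : (3 / ((μ + α) * α)) ∈ S := ⟨by positivity, upper_lip hμ hα⟩
  have hne : S.Nonempty := ⟨_, hup⟩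
  have hlb : ∀ m ∈ S, μ / (2 * (μ + α) ^ 2 * α) ≤ m := fun m hm =>
    lower_bound hμ hα hm.1 hm.2
  have hbdd : BddBelow S := ⟨_, hlb⟩
  refine ⟨sInf S, ?_, ?_, ?_, ?_, ?_⟩
  · exact le_trans (by positivity) (le_csInf hne hlb)
  · rw [lipschitzOnWith_iff_dist_le_mul]
    intro x hx y hy
    have h0 : 0 ≤ sInf S := le_trans (by positivity) (le_csInf hne hlb)
    rw [Real.coe_toNNReal _ h0]
    rcases eq_or_lt_of_le (dist_nonneg : (0:ℝ) ≤ dist x y) with hd | hd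
    · have hxy : x = y := by
        rw [← dist_le_zero]; rw [← hd]
      rw [hxy, dist_self]; positivity
    · have key : ∀ m ∈ S, dist (f x) (f y) / dist x y ≤ m := by
        intro m hm
        rw [div_le_iff₀ hd]
        have := (lipschitzOnWith_iff_dist_le_mul.1 hm.2) x hx y hy
        rwa [Real.coe_toNNReal _ hm.1] at this
      have := le_csInf hne key
      rw [div_le_iff₀ hd] at this
      exact this
  · exact fun M' hM' hlip => csInf_le hbdd ⟨hM', hlip⟩
  · exact le_csInf hne hlb
  · exact csInf_le hbdd hup
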